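/- Suppose the coordinate set I is statically sufficient and every I-fiber contains at least one positive-probability state, i.e., for every state s there exists a state t agreeing with s on I with P(t) > 0. Then I is stochastically sufficient. -/
import Mathlib


/-- Full-information optimizer: actions maximizing pointwise utility at state `s`. -/
def Opt {n : ℕ} {A : Type*} {X : Fin n → Type*}
    (U : A → (∀ i, X i) → ℝ) (s : ∀ i, X i) : Set A :=
  {a | ∀ b, U b s ≤ U a s}

/-- Conditional (unnormalized) expected utility of action `a` over the `I`-fiber of `s`. -/
noncomputable def condEU {n : ℕ} {A : Type*} {X : Fin n → Type*}
    [∀ i, Fintype (X i)] [∀ i, DecidableEq (X i)]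
    (U : A → (∀ i, X i) → ℝ) (P : (∀ i, X i) → ℝ)
    (I : Finset (Fin n)) (s : ∀ i, X i) (a : A) : ℝ :=
  ∑ t ∈ Finset.univ.filter (fun t : ∀ i, X i => ∀ i ∈ I, t i = s i), P t * U a t

/-- Conditional optimizer: actions maximizing conditional expected utility on the `I`-fiber. -/
noncomputable def OptS {n : ℕ} {A : Type*} {X : Fin n → Type*}
    [∀ i, Fintype (X i)] [∀ i, DecidableEq (X i)]
    (U : A → (∀ i, X i) → ℝ) (P : (∀ i, X i) → ℝ)
    (I : Finset (Fin n)) (s : ∀ i, X i) : Set A :=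
  {a | ∀ b, condEU U P I s b ≤ condEU U P I s a}

/-- `I` is statically sufficient: states agreeing on `I` have the same optimizer. -/
def StaticSufficient {n : ℕ} {A : Type*} {X : Fin n → Type*}
    (U : A → (∀ i, X i) → ℝ) (I : Finset (Fin n)) : Prop :=
  ∀ s t : ∀ i, X i, (∀ i ∈ I, s i = t i) → Opt U s = Opt U t

/-- `I` is stochastically sufficient: the conditional optimizer agrees with the
full-information optimizer at every state. -/
def StochSufficient {n : ℕ} {A : Type*} {X : Fin n → Type*}
    [∀ i, Fintype (X i)] [∀ i, DecidableEq (X i)]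
    (U : A → (∀ i, X i) → ℝ) (P : (∀ i, X i) → ℝ) (I : Finset (Fin n)) : Prop :=
  ∀ s : ∀ i, X i, OptS U P I s = Opt U s

/-- `I` is stochastically decisive: every positive-probability state's observed fiber
has a unique conditional optimal action. -/
def StochDecisive {n : ℕ} {A : Type*} {X : Fin n → Type*}
    [∀ i, Fintype (X i)] [∀ i, DecidableEq (X i)]
    (U : A → (∀ i, X i) → ℝ) (P : (∀ i, X i) → ℝ) (I : Finset (Fin n)) : Prop :=
  ∀ s : ∀ i, X i, 0 < P s → ∃ a : A, OptS U P I s = {a}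

theorem static_sufficient_positive_fibers_implies_stochastic
    {n : ℕ} {A : Type*} {X : Fin n → Type*}
    [Fintype A] [Nonempty A] [∀ i, Fintype (X i)] [∀ i, Nonempty (X i)]
    [∀ i, DecidableEq (X i)]
    (U : A → (∀ i, X i) → ℝ) (P : (∀ i, X i) → ℝ)
    (hP0 : ∀ s, 0 ≤ P s) (hP1 : ∑ s : ∀ i, X i, P s = 1)
    (I : Finset (Fin n))
    (hstat : StaticSufficient U I)
    (hpos : ∀ s : ∀ i, X i, ∃ t : ∀ i, X i, (∀ i ∈ I, t i = s i) ∧ 0 < P t) :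
    StochSufficient U P I := by
  intro s
  -- any action in Opt U s is in Opt U t for t in the fiber
  have hfib : ∀ a, a ∈ Opt U s → ∀ t : ∀ i, X i, (∀ i ∈ I, t i = s i) → a ∈ Opt U t := by
    intro a ha t ht
    rw [hstat t s ht]
    exact ha
  -- any element of Opt U s is in OptS
  have hOS : ∀ a, a ∈ Opt U s → a ∈ OptS U P I s := by
    intro a ha b
    unfold condEU
    apply Finset.sum_le_sum
    intro t htm
    have ht : ∀ i ∈ I, t i = s i := (Finset.mem_filter.mp htm).2
    exact mul_le_mul_of_nonneg_left (hfib a ha t ht b) (hP0 t)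
  -- Opt U s is nonempty
  obtain ⟨a₀, -, ha₀⟩ := Finset.exists_max_image (Finset.univ : Finset A)
    (fun b => U b s) ⟨Classical.arbitrary A, Finset.mem_univ _⟩
  have ha₀' : a₀ ∈ Opt U s := fun b => ha₀ b (Finset.mem_univ b)
  ext a
  constructor
  · intro haS
    -- condEU a₀ ≤ condEU a, and termwise condEU a ≤ condEU a₀
    have hsum : ∑ t ∈ Finset.univ.filter (fun t : ∀ i, X i => ∀ i ∈ I, t i = s i),
        (P t * U a₀ t - P t * U a t) = 0 := by
      rw [Finset.sum_sub_distrib]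
      have h1 : condEU U P I s a₀ ≤ condEU U P I s a := haS a₀
      have h2 : condEU U P I s a ≤ condEU U P I s a₀ := hOS a₀ ha₀' a
      unfold condEU at h1 h2
      linarith
    have hterm : ∀ t ∈ Finset.univ.filter (fun t : ∀ i, X i => ∀ i ∈ I, t i = s i),
        0 ≤ P t * U a₀ t - P t * U a t := by
      intro t htm
      have ht : ∀ i ∈ I, t i = s i := (Finset.mem_filter.mp htm).2
      have := mul_le_mul_of_nonneg_left (hfib a₀ ha₀' t ht a) (hP0 t)
      linarith
    have hzero := (Finset.sum_eq_zero_iff_of_nonneg hterm).mp hsum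
    obtain ⟨t₀, ht₀, hpt₀⟩ := hpos s
    have ht₀m : t₀ ∈ Finset.univ.filter (fun t : ∀ i, X i => ∀ i ∈ I, t i = s i) :=
      Finset.mem_filter.mpr ⟨Finset.mem_univ _, ht₀⟩
    have heq : U a t₀ = U a₀ t₀ := by
      have h := sub_eq_zero.mp (hzero t₀ ht₀m)
      exact (mul_left_cancel₀ hpt₀.ne' h).symm
    rw [hstat s t₀ (fun i hi => (ht₀ i hi).symm)]
    intro b
    rw [heq]
    exact hfib a₀ ha₀' t₀ ht₀ b
  · exact hOS a
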